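/- Let A be a Nakayama algebra and T a torsion class in A-mod with α(T) = { X ∈ T : every map in T into X has kernel in T }. Then every indecomposable split-projective module P in T admits a nonzero quotient lying in α(T). -/

import Mathlib

noncomputable section
open Function

/-- A module is uniserial if its submodules are totally ordered by inclusion. -/
def IsUniserial (A : Type) [Ring A] (M : Type) [AddCommGroup M] [Module A M] : Prop :=
  ∀ U V : Submodule A M, U ≤ V ∨ V ≤ U

/-- An indecomposable module: nonzero, and every direct sum decomposition is trivial. -/
def Indec (A : Type) [Ring A] (M : Type) [AddCommGroup M] [Module A M] : Prop :=
  Nontrivial M ∧ ∀ X Y : ModuleCat.{0} A, Nonempty (M ≃ₗ[A] (↑X × ↑Y)) →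
    Subsingleton X ∨ Subsingleton Y

/-- A ring is a Nakayama algebra if every finitely generated indecomposable projective
module and every finitely generated indecomposable injective module is uniserial. -/
def IsNakayamaAlgebra (A : Type) [Ring A] : Prop :=
  (∀ P : ModuleCat.{0} A, Module.Finite A P → Module.Projective A P → Indec A P →
    IsUniserial A P) ∧
  (∀ Q : ModuleCat.{0} A, Module.Finite A Q → Module.Injective A Q → Indec A Q →
    IsUniserial A Q)

/-- A class of modules is closed under isomorphism. -/
def RespIso (A : Type) [Ring A] (C : ModuleCat.{0} A → Prop) : Prop :=
  ∀ X Y : ModuleCat.{0} A, Nonempty (↑X ≃ₗ[A] ↑Y) → C X → C Y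

/-- A wide subcategory of the category of finitely generated `A`-modules: an
isomorphism-closed class of finitely generated modules closed under kernels, cokernels
and extensions. -/
def IsWide (A : Type) [Ring A] (C : ModuleCat.{0} A → Prop) : Prop :=
  (∀ X, C X → Module.Finite A X) ∧ RespIso A C ∧
  (∀ X Y : ModuleCat.{0} A, ∀ g : ↑X →ₗ[A] ↑Y, C X → C Y →
    C (ModuleCat.of A ↥(LinearMap.ker g))) ∧
  (∀ X Y : ModuleCat.{0} A, ∀ g : ↑X →ₗ[A] ↑Y, C X → C Y →
    C (ModuleCat.of A (↑Y ⧸ LinearMap.range g))) ∧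
  (∀ X Y Z : ModuleCat.{0} A, ∀ (i : ↑X →ₗ[A] ↑Y) (q : ↑Y →ₗ[A] ↑Z),
    Injective i → Surjective q → LinearMap.range i = LinearMap.ker q →
    C X → C Z → C Y)

/-- A torsion class in the category of finitely generated `A`-modules: an
isomorphism-closed class of finitely generated modules closed under quotients and
extensions. -/
def IsTorsionClass (A : Type) [Ring A] (T : ModuleCat.{0} A → Prop) : Prop :=
  (∀ X, T X → Module.Finite A X) ∧ RespIso A T ∧
  (∀ X Y : ModuleCat.{0} A, ∀ q : ↑X →ₗ[A] ↑Y, Surjective q → T X → T Y) ∧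
  (∀ X Y Z : ModuleCat.{0} A, ∀ (i : ↑X →ₗ[A] ↑Y) (q : ↑Y →ₗ[A] ↑Z),
    Injective i → Surjective q → LinearMap.range i = LinearMap.ker q →
    T X → T Z → T Y)

/-- `X ∈ Gen C`: `X` is a quotient of a finite direct sum of modules in `C`. -/
def InGenC (A : Type) [Ring A] (C : ModuleCat.{0} A → Prop)
    (X : ModuleCat.{0} A) : Prop :=
  ∃ (k : ℕ) (M : Fin k → ModuleCat.{0} A) (p : ((i : Fin k) → ↑(M i)) →ₗ[A] ↑X),
    (∀ i, C (M i)) ∧ Surjective p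

/-- `X ∈ β(C)`: `X` is an extension of two modules lying in `Gen C`. -/
def InBeta (A : Type) [Ring A] (C : ModuleCat.{0} A → Prop)
    (X : ModuleCat.{0} A) : Prop :=
  ∃ (Y : ModuleCat.{0} A) (j : ↑Y →ₗ[A] ↑X), Injective j ∧ InGenC A C Y ∧
    InGenC A C (ModuleCat.of A (↑X ⧸ LinearMap.range j))

/-- `X ∈ α(T)`: `X ∈ T` and every morphism in `T` into `X` has kernel in `T`. -/
def InAlpha (A : Type) [Ring A] (T : ModuleCat.{0} A → Prop)
    (X : ModuleCat.{0} A) : Prop :=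
  T X ∧ ∀ (Y : ModuleCat.{0} A) (g : ↑Y →ₗ[A] ↑X), T Y →
    T (ModuleCat.of A ↥(LinearMap.ker g))

/-- `P` is split-projective in `T`: `P ∈ T` and every surjection in `T` onto `P`
splits. -/
def SplitProjIn (A : Type) [Ring A] (T : ModuleCat.{0} A → Prop)
    (P : ModuleCat.{0} A) : Prop :=
  T P ∧ ∀ (X : ModuleCat.{0} A) (g : ↑X →ₗ[A] ↑P), T X → Surjective g →
    ∃ s : ↑P →ₗ[A] ↑X, g.comp s = LinearMap.id

theorem aux_split_proj_quotient
    (K A : Type) [Field K] [Ring A] [Algebra K A] [FiniteDimensional K A]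
    (T : ModuleCat.{0} A → Prop)
    (hfin : ∀ X, T X → Module.Finite A X)
    (hiso : ∀ X Y : ModuleCat.{0} A, Nonempty (↑X ≃ₗ[A] ↑Y) → T X → T Y)
    (hquot : ∀ X Y : ModuleCat.{0} A, ∀ q : ↑X →ₗ[A] ↑Y, Surjective q → T X → T Y)
    (hext : ∀ X Y Z : ModuleCat.{0} A, ∀ (i : ↑X →ₗ[A] ↑Y) (q : ↑Y →ₗ[A] ↑Z),
      Injective i → Surjective q → LinearMap.range i = LinearMap.ker q → T X → T Z → T Y)
    (P : ModuleCat.{0} A) (hnt : Nontrivial ↑P)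
    (hTP : T P)
    (hsplit : ∀ (X : ModuleCat.{0} A) (g : ↑X →ₗ[A] ↑P), T X → Surjective g →
      ∃ s : ↑P →ₗ[A] ↑X, g.comp s = LinearMap.id) :
    ∃ (N : ModuleCat.{0} A) (q : ↑P →ₗ[A] ↑N), Surjective q ∧ Nontrivial ↑N ∧
      (T N ∧ ∀ (Y : ModuleCat.{0} A) (g : ↑Y →ₗ[A] ↑N), T Y →
        T (ModuleCat.of A ↥(LinearMap.ker g))) := by
  -- Noetherian setup
  letI : Module K ↑P := Module.compHom ↑P (algebraMap K A)
  haveI : IsScalarTower K A ↑P := ⟨fun k a x => by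
    show (k • a) • x = algebraMap K A k • (a • x)
    rw [Algebra.smul_def, mul_smul]⟩
  haveI : Module.Finite A ↑P := hfin P hTP
  haveI : Module.Finite K ↑P := Module.Finite.trans A ↑P
  haveI : IsNoetherian A ↑P := isNoetherian_of_tower K inferInstance
  -- the set of proper T-submodules of P
  set S : Set (Submodule A ↑P) := {V | V ≠ ⊤ ∧ T (ModuleCat.of A ↥V)} with hS
  have hbot : (⊥ : Submodule A ↑P) ∈ S := by
    constructor
    · exact bot_ne_top
    · exact hquot P (ModuleCat.of A ↥(⊥ : Submodule A ↑P)) 0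
        (fun y => ⟨0, Subsingleton.elim _ _⟩) hTP
  obtain ⟨V, hVS, hVmax⟩ := (set_has_maximal_iff_noetherian.mpr ‹IsNoetherian A ↑P›) S ⟨⊥, hbot⟩
  refine ⟨ModuleCat.of A (↑P ⧸ V), V.mkQ, V.mkQ_surjective, ?_, ?_, ?_⟩
  · exact (Submodule.Quotient.nontrivial_iff (p := V)).mpr (lt_top_iff_ne_top.mpr hVS.1).ne
  · exact hquot P _ V.mkQ V.mkQ_surjective hTP
  · intro Y g' hY
    let g : ↑Y →ₗ[A] (↑P ⧸ V) := g'
    have hker' : LinearMap.ker g' = LinearMap.ker g := rfl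
    rw [hker']
    by_cases hr : LinearMap.range g = ⊤
    · -- g surjective: pullback argument
      have hg : Surjective g := LinearMap.range_eq_top.mp hr
      set f : (↑Y × ↑P) →ₗ[A] (↑P ⧸ V) :=
        g.comp (LinearMap.fst A ↑Y ↑P) - V.mkQ.comp (LinearMap.snd A ↑Y ↑P) with hf
      set E : Submodule A (↑Y × ↑P) := LinearMap.ker f with hE
      have hmemE : ∀ z : ↑Y × ↑P, z ∈ E ↔ g z.1 = V.mkQ z.2 := by
        intro z
        simp [hE, hf, LinearMap.mem_ker, LinearMap.sub_apply, LinearMap.comp_apply,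
          sub_eq_zero]
      set π₁ : ↥E →ₗ[A] ↑Y := (LinearMap.fst A ↑Y ↑P).comp E.subtype with hπ₁
      set π₂ : ↥E →ₗ[A] ↑P := (LinearMap.snd A ↑Y ↑P).comp E.subtype with hπ₂
      have hπ₂s : Surjective π₂ := by
        intro p
        obtain ⟨y, hy⟩ := hg (V.mkQ p)
        exact ⟨⟨(y, p), (hmemE _).mpr hy⟩, rfl⟩
      have hπ₁s : Surjective π₁ := by
        intro y
        obtain ⟨p, hp⟩ := V.mkQ_surjective (g y)
        exact ⟨⟨(y, p), (hmemE _).mpr hp.symm⟩, rfl⟩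
      have hjVmem : ∀ v : ↥V, ((0, (v : ↑P)) : ↑Y × ↑P) ∈ E := by
        intro v
        rw [hmemE]
        show g 0 = V.mkQ (v : ↑P)
        rw [map_zero]
        exact ((Submodule.Quotient.mk_eq_zero V).mpr v.2).symm
      set jV : ↥V →ₗ[A] ↥E :=
        LinearMap.codRestrict E ((LinearMap.inr A ↑Y ↑P).comp V.subtype) hjVmem with hjV
      have hjVi : Injective jV := by
        intro a b hab
        have : ((0, (a : ↑P)) : ↑Y × ↑P) = (0, (b : ↑P)) := congrArg Subtype.val hab
        exact Subtype.ext (congrArg Prod.snd this)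
      have hrng : LinearMap.range jV = LinearMap.ker π₁ := by
        ext z
        constructor
        · rintro ⟨v, rfl⟩
          show ((0, (v : ↑P)) : ↑Y × ↑P).1 = 0
          rfl
        · intro hz
          have hz1 : ((z : ↥E) : ↑Y × ↑P).1 = 0 := LinearMap.mem_ker.mp hz
          have hz2 : ((z : ↥E) : ↑Y × ↑P).2 ∈ V := by
            have h3 := (hmemE _).mp (z : ↥E).2
            rw [hz1, map_zero] at h3
            exact (Submodule.Quotient.mk_eq_zero V).mp h3.symm
          refine ⟨⟨((z : ↥E) : ↑Y × ↑P).2, hz2⟩, Subtype.ext ?_⟩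
          show ((0 : ↑Y), ((z : ↥E) : ↑Y × ↑P).2) = ((z : ↥E) : ↑Y × ↑P)
          rw [← hz1]
      have hTE : T (ModuleCat.of A ↥E) :=
        hext (ModuleCat.of A ↥V) (ModuleCat.of A ↥E) Y jV π₁ hjVi hπ₁s hrng hVS.2 hY
      obtain ⟨s₀, hs⟩ := hsplit (ModuleCat.of A ↥E) π₂ hTE hπ₂s
      let s : ↑P →ₗ[A] ↥E := s₀
      have hsid : ∀ p : ↑P, π₂ (s p) = p :=
        fun p => congrFun (congrArg DFunLike.coe hs) p
      -- retraction onto ker π₂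
      have hmemk : ∀ e : ↥E, e - s (π₂ e) ∈ LinearMap.ker π₂ := by
        intro e
        rw [LinearMap.mem_ker, map_sub, hsid, sub_self]
      set r : ↥E →ₗ[A] ↥(LinearMap.ker π₂) :=
        LinearMap.codRestrict (LinearMap.ker π₂) (LinearMap.id - s.comp π₂) hmemk with hrdef
      have hrs : Surjective r := by
        rintro ⟨e, he⟩
        refine ⟨e, Subtype.ext ?_⟩
        show e - s (π₂ e) = e
        rw [LinearMap.mem_ker.mp he, map_zero, sub_zero]
      have hTk : T (ModuleCat.of A ↥(LinearMap.ker π₂)) :=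
        hquot (ModuleCat.of A ↥E) (ModuleCat.of A ↥(LinearMap.ker π₂)) r hrs hTE
      -- ker π₂ ≅ ker g
      have hmem2 : ∀ e : ↥(LinearMap.ker π₂), ((e : ↥E) : ↑Y × ↑P).1 ∈ LinearMap.ker g := by
        intro e
        have h1 := (hmemE _).mp (e : ↥E).2
        have h2 : ((e : ↥E) : ↑Y × ↑P).2 = 0 := LinearMap.mem_ker.mp e.2
        rw [LinearMap.mem_ker, h1, h2, map_zero]
      set φ : ↥(LinearMap.ker π₂) →ₗ[A] ↥(LinearMap.ker g) :=
        LinearMap.codRestrict (LinearMap.ker g)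
          ((LinearMap.fst A ↑Y ↑P).comp (E.subtype.comp (LinearMap.ker π₂).subtype)) hmem2 with hφ
      have hφb : Bijective φ := by
        constructor
        · intro a b hab
          have h1 : ((a : ↥E) : ↑Y × ↑P).1 = ((b : ↥E) : ↑Y × ↑P).1 :=
            congrArg Subtype.val hab
          have h2 : ((a : ↥E) : ↑Y × ↑P).2 = ((b : ↥E) : ↑Y × ↑P).2 := by
            show π₂ (a : ↥E) = π₂ (b : ↥E)
            rw [LinearMap.mem_ker.mp a.2, LinearMap.mem_ker.mp b.2]
          exact Subtype.ext (Subtype.ext (Prod.ext h1 h2))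
        · rintro ⟨y, hy⟩
          have hyE : ((y, 0) : ↑Y × ↑P) ∈ E := by
            rw [hmemE]
            show g y = V.mkQ 0
            rw [map_zero]
            exact LinearMap.mem_ker.mp hy
          refine ⟨⟨⟨(y, 0), hyE⟩, ?_⟩, rfl⟩
          show ((y, 0) : ↑Y × ↑P).2 = 0
          rfl
      exact hiso (ModuleCat.of A ↥(LinearMap.ker π₂)) (ModuleCat.of A ↥(LinearMap.ker g))
        ⟨LinearEquiv.ofBijective φ hφb⟩ hTk
    · -- g not surjective: image gives a proper T-submodule containing V, contradiction
      set W : Submodule A ↑P := (LinearMap.range g).comap V.mkQ with hW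
      have hVW : V ≤ W := by
        intro x hx
        show V.mkQ x ∈ LinearMap.range g
        rw [show V.mkQ x = 0 from (Submodule.Quotient.mk_eq_zero V).mpr hx]
        exact zero_mem _
      have hmc : Submodule.map V.mkQ W = LinearMap.range g := by
        rw [hW]
        exact Submodule.map_comap_eq_of_surjective V.mkQ_surjective _
      have hWtop : W ≠ ⊤ := by
        intro h'
        apply hr
        rw [← hmc, h', Submodule.map_top, LinearMap.range_eq_top]
        exact V.mkQ_surjective
      have hTr : T (ModuleCat.of A ↥(LinearMap.range g)) :=
        hquot Y (ModuleCat.of A ↥(LinearMap.range g)) g.rangeRestrict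
          (LinearMap.surjective_rangeRestrict g) hY
      -- W is an extension of range g by V
      set i : ↥V →ₗ[A] ↥W := Submodule.inclusion hVW with hi
      have hqWmem : ∀ w : ↥W, V.mkQ (w : ↑P) ∈ LinearMap.range g := fun w => w.2
      set qW : ↥W →ₗ[A] ↥(LinearMap.range g) :=
        LinearMap.codRestrict (LinearMap.range g) (V.mkQ.comp W.subtype) hqWmem with hqW
      have hqWs : Surjective qW := by
        rintro ⟨x, hx⟩
        obtain ⟨p, hp⟩ := V.mkQ_surjective x
        have hpW : p ∈ W := by
          show V.mkQ p ∈ LinearMap.range g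
          rw [hp]; exact hx
        exact ⟨⟨p, hpW⟩, Subtype.ext hp⟩
      have hrngi : LinearMap.range i = LinearMap.ker qW := by
        apply le_antisymm
        · rintro x ⟨v, rfl⟩
          rw [LinearMap.mem_ker]
          apply Subtype.ext
          show V.mkQ ((i v : ↥W) : ↑P) = 0
          exact (Submodule.Quotient.mk_eq_zero V).mpr v.2
        · intro x hx
          have hx0 : V.mkQ (x : ↑P) = 0 := congrArg Subtype.val (LinearMap.mem_ker.mp hx)
          exact ⟨⟨(x : ↑P), (Submodule.Quotient.mk_eq_zero V).mp hx0⟩, rfl⟩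
      have hTW : T (ModuleCat.of A ↥W) :=
        hext (ModuleCat.of A ↥V) (ModuleCat.of A ↥W) (ModuleCat.of A ↥(LinearMap.range g))
          i qW (Submodule.inclusion_injective hVW) hqWs hrngi hVS.2 hTr
      have hWV : W = V := by
        by_contra hne
        exact hVmax W ⟨hWtop, hTW⟩ (lt_of_le_of_ne hVW (fun h => hne h.symm))
      -- then g = 0
      have hg0 : ∀ y : ↑Y, g y = 0 := by
        intro y
        obtain ⟨p, hp⟩ := V.mkQ_surjective (g y)
        have hpW : p ∈ W := by
          show V.mkQ p ∈ LinearMap.range g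
          rw [hp]; exact ⟨y, rfl⟩
        rw [← hp]
        exact (Submodule.Quotient.mk_eq_zero V).mpr (hWV ▸ hpW)
      have hkertop : LinearMap.ker g = ⊤ := by
        ext y; simp [LinearMap.mem_ker, hg0]
      exact hiso Y (ModuleCat.of A ↥(LinearMap.ker g))
        ⟨(LinearEquiv.ofTop (LinearMap.ker g) hkertop).symm⟩ hY

/-- Let `A` be a Nakayama algebra and `T` a torsion class of finitely
generated `A`-modules.  Then every indecomposable split-projective module `P` in `T`
admits a nonzero quotient lying in `α(T)`. -/
theorem split_projective_has_quotient_in_alpha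
    (K A : Type) [Field K] [IsAlgClosed K] [Ring A] [Algebra K A] [FiniteDimensional K A]
    (hNak : IsNakayamaAlgebra A)
    (T : ModuleCat.{0} A → Prop) (hT : IsTorsionClass A T)
    (P : ModuleCat.{0} A) (hind : Indec A P) (hsp : SplitProjIn A T P) :
    ∃ (N : ModuleCat.{0} A) (q : ↑P →ₗ[A] ↑N), Surjective q ∧ Nontrivial ↑N ∧
      InAlpha A T N := by
  obtain ⟨hfin, hiso, hquot, hext⟩ := hT
  obtain ⟨N, q, h1, h2, h3, h4⟩ := aux_split_proj_quotient K A T hfin hiso hquot hext P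
    hind.1 hsp.1 hsp.2
  exact ⟨N, q, h1, h2, h3, h4⟩

end
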